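/- Fix 0 < y_1 and x_3 < -y_1, and define g_1(y_2) = (∫_0^{y_2} ds/sqrt(R(s)))^{-1} ∫_0^{y_2} (-s^2 + ((y_1+y_2-x_3)/2)s + x_3(y_1+y_2)/4 + (y_1-y_2)^2/8)/sqrt(R(s)) ds, where sqrt(R(s)) = -sqrt(s(y_2-s)(y_1-s)). Then g_1(y_2) = (y_1/4)(x_3 + y_1/2) + O(y_2^2) as y_2 ↓ 0. -/

import Mathlib

open Asymptotics MeasureTheory intervalIntegral Set

lemma sqrtInvLip {c a b : ℝ} (hc : 0 < c) (ha : c ≤ a) (hb : c ≤ b) :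
    |1 / Real.sqrt a - 1 / Real.sqrt b| ≤ |a - b| / (c * Real.sqrt c) := by
  wlog h : b ≤ a generalizing a b
  · rw [abs_sub_comm, abs_sub_comm a b]; exact this hb ha (le_of_not_ge h)
  have h0b : 0 < b := hc.trans_le hb
  have h0a : 0 < a := hc.trans_le ha
  have hsa : 0 < Real.sqrt a := Real.sqrt_pos.2 h0a
  have hsb : 0 < Real.sqrt b := Real.sqrt_pos.2 h0b
  have hsc : 0 < Real.sqrt c := Real.sqrt_pos.2 hc
  have hca : Real.sqrt c ≤ Real.sqrt a := Real.sqrt_le_sqrt ha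
  have hcb : Real.sqrt c ≤ Real.sqrt b := Real.sqrt_le_sqrt hb
  have hba : Real.sqrt b ≤ Real.sqrt a := Real.sqrt_le_sqrt h
  have ea : Real.sqrt a * Real.sqrt a = a := Real.mul_self_sqrt h0a.le
  have eb : Real.sqrt b * Real.sqrt b = b := Real.mul_self_sqrt h0b.le
  have ec : Real.sqrt c * Real.sqrt c = c := Real.mul_self_sqrt hc.le
  have h1 : 1 / Real.sqrt a ≤ 1 / Real.sqrt b := one_div_le_one_div_of_le hsb hba
  rw [abs_of_nonpos (by linarith), abs_of_nonneg (by linarith : (0:ℝ) ≤ a - b), neg_sub,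
    le_div_iff₀ (by positivity)]
  have e2 : 1 / Real.sqrt b - 1 / Real.sqrt a
      = (Real.sqrt a - Real.sqrt b) / (Real.sqrt b * Real.sqrt a) := by
    field_simp
  rw [e2, div_mul_eq_mul_div, div_le_iff₀ (by positivity)]
  have e1 : (Real.sqrt a - Real.sqrt b) * (Real.sqrt a + Real.sqrt b) = a - b := by nlinarith
  have h3 : Real.sqrt c * c ≤ (Real.sqrt a + Real.sqrt b) * (Real.sqrt b * Real.sqrt a) := by nlinarith
  have h4 := mul_le_mul_of_nonneg_left h3 (sub_nonneg.2 hba)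
  calc (Real.sqrt a - Real.sqrt b) * (c * Real.sqrt c)
      = (Real.sqrt a - Real.sqrt b) * (Real.sqrt c * c) := by ring
    _ ≤ (Real.sqrt a - Real.sqrt b) * ((Real.sqrt a + Real.sqrt b) * (Real.sqrt b * Real.sqrt a)) := h4
    _ = (a - b) * (Real.sqrt b * Real.sqrt a) := by rw [← e1]; ring

lemma intBound {f g : ℝ → ℝ} {b : ℝ} (hb : 0 < b) (hg : IntervalIntegrable g volume 0 b)
    (hf : MeasureTheory.AEStronglyMeasurable f (volume.restrict (Set.Ioc 0 b)))
    (h : ∀ x ∈ Set.Ioo 0 b, |f x| ≤ g x) :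
    IntervalIntegrable f volume 0 b ∧
      |∫ x in (0:ℝ)..b, f x| ≤ ∫ x in (0:ℝ)..b, g x := by
  have hres : volume.restrict (Set.Ioc (0:ℝ) b) = volume.restrict (Set.Ioo (0:ℝ) b) :=
    Measure.restrict_congr_set Ioo_ae_eq_Ioc.symm
  have hae : ∀ᵐ x ∂(volume.restrict (Set.Ioc (0:ℝ) b)), |f x| ≤ g x := by
    rw [hres, ae_restrict_iff' measurableSet_Ioo]
    exact MeasureTheory.ae_of_all _ h
  have hfint : IntervalIntegrable f volume 0 b := by
    apply hg.mono_fun' (by rwa [Set.uIoc_of_le hb.le]) ?_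
    rw [Set.uIoc_of_le hb.le]
    simp only [Real.norm_eq_abs]; exact hae
  refine ⟨hfint, le_trans (abs_integral_le_integral_abs hb.le) ?_⟩
  apply integral_mono_ae_restrict hb.le hfint.abs hg
  have : ∀ᵐ x ∂(volume.restrict (Set.Icc (0:ℝ) b)), |f x| ≤ g x := by
    rw [Measure.restrict_congr_set (Ioo_ae_eq_Icc (μ := volume) (a := (0:ℝ)) (b := b)).symm,
      ae_restrict_iff' measurableSet_Ioo]
    exact MeasureTheory.ae_of_all _ h
  exact this



lemma wInt (y₁ y₂ : ℝ) (hy1 : 0 < y₁) (h0 : 0 < y₂) (h2 : y₂ < y₁) :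
    IntervalIntegrable (fun s => 1 / Real.sqrt (s * (y₂ - s) * (y₁ - s))) volume 0 y₂ := by
  have hdpos : (0:ℝ) < (y₂ / 2) * (y₁ - y₂) := by
    apply mul_pos <;> linarith
  set d : ℝ := (y₂ / 2) * (y₁ - y₂) with hd
  set c : ℝ := 1 / Real.sqrt d with hc
  have hcpos : 0 < c := by rw [hc]; positivity
  -- the dominating function
  have hg1 : IntervalIntegrable (fun s : ℝ => s ^ (-(1/2) : ℝ)) volume 0 y₂ :=
    intervalIntegrable_rpow' (by norm_num)
  have hg2 : IntervalIntegrable (fun s : ℝ => (y₂ - s) ^ (-(1/2) : ℝ)) volume 0 y₂ := by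
    have := (intervalIntegrable_rpow' (a := 0) (b := y₂) (r := -(1/2)) (by norm_num)).comp_sub_left y₂
    simpa using this.symm
  have hg : IntervalIntegrable
      (fun s : ℝ => c * (s ^ (-(1/2) : ℝ) + (y₂ - s) ^ (-(1/2) : ℝ))) volume 0 y₂ := by
    simpa [mul_add] using ((hg1.add hg2).const_mul c)
  refine (intBound h0 hg ?_ ?_).1
  · exact ((by fun_prop : Measurable fun s => 1 / Real.sqrt (s * (y₂ - s) * (y₁ - s))).aestronglyMeasurable)
  intro x hx
  obtain ⟨hx0, hxy⟩ := hx
  have hprod : 0 < x * (y₂ - x) * (y₁ - x) := by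
    apply mul_pos (mul_pos hx0 (by linarith)) (by linarith)
  rw [abs_of_nonneg (by positivity)]
  rcases le_or_gt x (y₂ / 2) with hhalf | hhalf
  · -- x*(y₂-x)*(y₁-x) ≥ d * x
    have hlow : d * x ≤ x * (y₂ - x) * (y₁ - x) := by
      calc d * x = (x * (y₂ / 2)) * (y₁ - y₂) := by rw [hd]; ring
        _ ≤ (x * (y₂ - x)) * (y₁ - x) := by
            apply mul_le_mul (mul_le_mul_of_nonneg_left (by linarith) hx0.le) (by linarith)
              (by linarith) (mul_nonneg hx0.le (by linarith))
    have h1 : 1 / Real.sqrt (x * (y₂ - x) * (y₁ - x)) ≤ 1 / Real.sqrt (d * x) := by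
      apply one_div_le_one_div_of_le (Real.sqrt_pos.2 (mul_pos hdpos (by linarith))) (Real.sqrt_le_sqrt hlow)
    have h2 : 1 / Real.sqrt (d * x) = c * x ^ (-(1/2) : ℝ) := by
      rw [Real.sqrt_mul hdpos.le, hc, Real.rpow_neg hx0.le, ← Real.sqrt_eq_rpow]
      field_simp
    have h3 : (0:ℝ) ≤ c * (y₂ - x) ^ (-(1/2) : ℝ) :=
      mul_nonneg hcpos.le (Real.rpow_nonneg (by linarith) _)
    calc 1 / Real.sqrt (x * (y₂ - x) * (y₁ - x)) ≤ 1 / Real.sqrt (d * x) := h1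
      _ = c * x ^ (-(1/2) : ℝ) := h2
      _ ≤ c * (x ^ (-(1/2) : ℝ) + (y₂ - x) ^ (-(1/2) : ℝ)) := by nlinarith
  · have hlow : d * (y₂ - x) ≤ x * (y₂ - x) * (y₁ - x) := by
      calc d * (y₂ - x) = ((y₂ / 2) * (y₂ - x)) * (y₁ - y₂) := by rw [hd]; ring
        _ ≤ (x * (y₂ - x)) * (y₁ - x) := by
            apply mul_le_mul (mul_le_mul_of_nonneg_right (by linarith) (by linarith)) (by linarith)
              (by linarith) (mul_nonneg hx0.le (by linarith))
    have h1 : 1 / Real.sqrt (x * (y₂ - x) * (y₁ - x)) ≤ 1 / Real.sqrt (d * (y₂ - x)) := by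
      apply one_div_le_one_div_of_le (Real.sqrt_pos.2 (mul_pos hdpos (by linarith))) (Real.sqrt_le_sqrt hlow)
    have h2 : 1 / Real.sqrt (d * (y₂ - x)) = c * (y₂ - x) ^ (-(1/2) : ℝ) := by
      rw [Real.sqrt_mul hdpos.le, hc, Real.rpow_neg (by linarith : (0:ℝ) ≤ y₂ - x), ← Real.sqrt_eq_rpow]
      field_simp
    have h3 : (0:ℝ) ≤ c * x ^ (-(1/2) : ℝ) :=
      mul_nonneg hcpos.le (Real.rpow_nonneg hx0.le _)
    calc 1 / Real.sqrt (x * (y₂ - x) * (y₁ - x)) ≤ 1 / Real.sqrt (d * (y₂ - x)) := h1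
      _ = c * (y₂ - x) ^ (-(1/2) : ℝ) := h2
      _ ≤ c * (x ^ (-(1/2) : ℝ) + (y₂ - x) ^ (-(1/2) : ℝ)) := by nlinarith

set_option maxHeartbeats 1000000 in
lemma core (y₁ x₃ : ℝ) (hy1 : 0 < y₁) (hx3 : x₃ < -y₁) {y₂ : ℝ} (h0 : 0 < y₂) (h2 : y₂ ≤ y₁ / 2) :
    |(∫ s in (0:ℝ)..y₂, 1 / (-(Real.sqrt (s * (y₂ - s) * (y₁ - s)))))⁻¹ *
      (∫ s in (0:ℝ)..y₂,
        (-s ^ 2 + ((y₁ + y₂ - x₃) / 2) * s + x₃ * (y₁ + y₂) / 4 + (y₁ - y₂) ^ 2 / 8) /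
          (-(Real.sqrt (s * (y₂ - s) * (y₁ - s))))) - (y₁ / 4) * (x₃ + y₁ / 2)|
    ≤ (1 + ((y₁ + y₁ - x₃) / 2) * (((y₁ / 2) * Real.sqrt (y₁ / 2))⁻¹ * Real.sqrt y₁ / 4) + 3 / 8)
        * y₂ ^ 2 := by
  have hy2y1 : y₂ < y₁ := by linarith
  set w : ℝ → ℝ := fun s => 1 / Real.sqrt (s * (y₂ - s) * (y₁ - s)) with hw
  set u : ℝ → ℝ := fun s => 1 / Real.sqrt (s * (y₂ - s)) with hu
  set G : ℝ → ℝ := fun s => 1 / Real.sqrt (y₁ - s) with hG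
  set P : ℝ → ℝ := fun s =>
    -s ^ 2 + ((y₁ + y₂ - x₃) / 2) * s + x₃ * (y₁ + y₂) / 4 + (y₁ - y₂) ^ 2 / 8 with hP
  set a : ℝ := (y₁ + y₂ - x₃) / 2 with ha
  set cc : ℝ := x₃ * (y₁ + y₂) / 4 + (y₁ - y₂) ^ 2 / 8 with hcc
  set L : ℝ := (y₁ / 4) * (x₃ + y₁ / 2) with hL
  set M : ℝ := ((y₁ / 2) * Real.sqrt (y₁ / 2))⁻¹ with hM
  have hMpos : 0 < M := by rw [hM]; positivity
  have Iw : IntervalIntegrable w volume 0 y₂ := wInt y₁ y₂ hy1 h0 hy2y1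
  have hwnn : ∀ s, 0 ≤ w s := fun s => by simp only [hw]; positivity
  set A : ℝ := ∫ s in (0:ℝ)..y₂, w s with hA
  have hApos : 0 < A := by
    rw [hA]
    apply intervalIntegral_pos_of_pos_on Iw _ h0
    intro x ⟨hx0, hxy⟩
    simp only [hw]
    have : 0 < x * (y₂ - x) * (y₁ - x) := by
      apply mul_pos (mul_pos hx0 (by linarith)) (by linarith)
    positivity
  -- integrability of the polynomial-weighted integrals
  have IC2 : IntervalIntegrable (fun s => s ^ 2 * w s) volume 0 y₂ :=
    Iw.continuousOn_mul (by fun_prop)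
  have IB : IntervalIntegrable (fun s => s * w s) volume 0 y₂ :=
    Iw.continuousOn_mul (by fun_prop)
  have Ih : IntervalIntegrable (fun s => (s - y₂ / 2) * w s) volume 0 y₂ :=
    Iw.continuousOn_mul (by fun_prop)
  have IN : IntervalIntegrable (fun s => P s * w s) volume 0 y₂ :=
    Iw.continuousOn_mul (by rw [hP]; fun_prop)
  set B : ℝ := ∫ s in (0:ℝ)..y₂, s * w s with hB
  set C2 : ℝ := ∫ s in (0:ℝ)..y₂, s ^ 2 * w s with hC2
  set E : ℝ := ∫ s in (0:ℝ)..y₂, (s - y₂ / 2) * w s with hE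
  set N : ℝ := ∫ s in (0:ℝ)..y₂, P s * w s with hN
  -- C2 bound
  have hC2b : |C2| ≤ y₂ ^ 2 * A := by
    have := (intBound h0 (Iw.const_mul (y₂ ^ 2)) IC2.1.aestronglyMeasurable ?_).2
    · rw [hC2]
      calc |∫ s in (0:ℝ)..y₂, s ^ 2 * w s| ≤ ∫ s in (0:ℝ)..y₂, y₂ ^ 2 * w s := this
        _ = y₂ ^ 2 * A := by rw [intervalIntegral.integral_const_mul, hA]
    · intro x ⟨hx0, hxy⟩
      rw [abs_of_nonneg (mul_nonneg (by positivity) (hwnn x))]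
      apply mul_le_mul_of_nonneg_right (by nlinarith) (hwnn x)
  -- u : integrability and integral bound
  have hub : ∀ x ∈ Set.Ioo (0:ℝ) y₂, |u x| ≤ Real.sqrt y₁ * w x := by
    intro x ⟨hx0, hxy⟩
    have hX : 0 < Real.sqrt (x * (y₂ - x)) := Real.sqrt_pos.2 (by nlinarith)
    have hY : 0 < Real.sqrt (y₁ - x) := Real.sqrt_pos.2 (by linarith)
    have hYle : Real.sqrt (y₁ - x) ≤ Real.sqrt y₁ := Real.sqrt_le_sqrt (by linarith)
    simp only [hu, hw]
    rw [abs_of_nonneg (by positivity)]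
    rw [Real.sqrt_mul (by nlinarith : (0:ℝ) ≤ x * (y₂ - x)), mul_one_div,
      div_le_div_iff₀ hX (by positivity)]
    nlinarith
  obtain ⟨Iu, hIu2⟩ := intBound h0 (Iw.const_mul (Real.sqrt y₁))
      ((by rw [hu]; fun_prop : Measurable u).aestronglyMeasurable) hub
  have hu_int_le : (∫ s in (0:ℝ)..y₂, u s) ≤ Real.sqrt y₁ * A := by
    refine le_trans (le_abs_self _) (le_trans hIu2 ?_)
    rw [intervalIntegral.integral_const_mul, hA]
  have hu_int_nn : 0 ≤ ∫ s in (0:ℝ)..y₂, u s := by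
    apply intervalIntegral.integral_nonneg h0.le
    intro s _; simp only [hu]; positivity
  -- splitting of w on Icc
  have wsplit : ∀ s ∈ Icc (0:ℝ) y₂, w s = u s * G s := by
    intro s ⟨hs0, hsy⟩
    simp only [hw, hu, hG]
    rw [Real.sqrt_mul (by nlinarith : (0:ℝ) ≤ s * (y₂ - s)), one_div_mul_one_div]
  have wrefl : ∀ s ∈ Icc (0:ℝ) y₂, w (y₂ - s) = u s * G (y₂ - s) := by
    intro s ⟨hs0, hsy⟩
    simp only [hw, hu, hG]
    rw [show (y₂ - s) * (y₂ - (y₂ - s)) * (y₁ - (y₂ - s))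
        = (s * (y₂ - s)) * (y₁ - (y₂ - s)) by ring]
    rw [Real.sqrt_mul (by nlinarith : (0:ℝ) ≤ s * (y₂ - s)), one_div_mul_one_div]
  -- reflection identity : ∫ reflected h = E
  have Icomp : IntervalIntegrable (fun s => (y₂ - s - y₂ / 2) * w (y₂ - s)) volume 0 y₂ := by
    have := (Ih.comp_sub_left y₂).symm
    simpa using this
  have hrefl : (∫ s in (0:ℝ)..y₂, (y₂ - s - y₂ / 2) * w (y₂ - s)) = E := by
    have := integral_comp_sub_left (fun t => (t - y₂ / 2) * w t) y₂ (a := 0) (b := y₂)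
    simpa using this
  have h2E : (∫ s in (0:ℝ)..y₂, (s - y₂ / 2) * u s * (G s - G (y₂ - s))) = 2 * E := by
    rw [integral_congr (g := fun s => (s - y₂ / 2) * w s + (y₂ - s - y₂ / 2) * w (y₂ - s)) ?_]
    · rw [integral_add Ih Icomp, hrefl, hE]; ring
    · intro s hs
      rw [Set.uIcc_of_le h0.le] at hs
      simp only
      rw [wsplit s hs, wrefl s hs]; ring
  -- bound on the symmetrized integral
  have hFpt : ∀ x ∈ Set.Ioo (0:ℝ) y₂,
      |(x - y₂ / 2) * u x * (G x - G (y₂ - x))| ≤ ((y₂ / 2) * (M * y₂)) * u x := by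
    intro x ⟨hx0, hxy⟩
    have b1 : |x - y₂ / 2| ≤ y₂ / 2 := abs_le.2 ⟨by linarith, by linarith⟩
    have b2 : |G x - G (y₂ - x)| ≤ M * y₂ := by
      simp only [hG]
      refine le_trans (sqrtInvLip (c := y₁ / 2) (by linarith) (by linarith) (by linarith)) ?_
      rw [show y₁ - x - (y₁ - (y₂ - x)) = y₂ - 2 * x by ring]
      have : |y₂ - 2 * x| ≤ y₂ := abs_le.2 ⟨by linarith, by linarith⟩
      calc |y₂ - 2 * x| / (y₁ / 2 * Real.sqrt (y₁ / 2)) ≤ y₂ / (y₁ / 2 * Real.sqrt (y₁ / 2)) := by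
            gcongr
        _ = M * y₂ := by rw [hM, div_eq_mul_inv, mul_comm]
    have hunn : 0 ≤ u x := by simp only [hu]; positivity
    calc |(x - y₂ / 2) * u x * (G x - G (y₂ - x))|
        = |x - y₂ / 2| * u x * |G x - G (y₂ - x)| := by
          rw [abs_mul, abs_mul, abs_of_nonneg hunn]
      _ ≤ (y₂ / 2) * u x * (M * y₂) := by
          apply mul_le_mul (mul_le_mul_of_nonneg_right b1 hunn) b2 (abs_nonneg _)
            (by positivity)
      _ = ((y₂ / 2) * (M * y₂)) * u x := by ring
  obtain ⟨-, hF2⟩ := intBound h0 (Iu.const_mul ((y₂ / 2) * (M * y₂)))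
      ((by rw [hu, hG]; fun_prop :
        Measurable fun s => (s - y₂ / 2) * u s * (G s - G (y₂ - s))).aestronglyMeasurable) hFpt
  have hEb : |E| ≤ (M * Real.sqrt y₁ / 4) * y₂ ^ 2 * A := by
    have h1 : |2 * E| ≤ ((y₂ / 2) * (M * y₂)) * (Real.sqrt y₁ * A) := by
      rw [← h2E]
      refine le_trans hF2 ?_
      rw [intervalIntegral.integral_const_mul]
      apply mul_le_mul_of_nonneg_left hu_int_le (by positivity)
    rw [abs_mul, abs_of_nonneg (by norm_num : (0:ℝ) ≤ 2)] at h1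
    nlinarith [Real.sqrt_nonneg y₁]
  -- decomposition of N
  have hBrel : B = E + y₂ / 2 * A := by
    have : E = B - y₂ / 2 * A := by
      rw [hE, hB, hA, ← intervalIntegral.integral_const_mul, ← integral_sub IB (Iw.const_mul _)]
      apply integral_congr
      intro s _; simp only; ring
    linarith
  have hNsplit : N = -C2 + a * B + cc * A := by
    rw [hN, hC2, hB, hA]
    rw [integral_congr (g := fun s => (a * (s * w s) + cc * (w s)) - s ^ 2 * w s) ?_]
    · rw [integral_sub ((IB.const_mul a).add (Iw.const_mul cc)) IC2,
        integral_add (IB.const_mul a) (Iw.const_mul cc),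
        intervalIntegral.integral_const_mul, intervalIntegral.integral_const_mul]
      ring
    · intro s _
      simp only [hP]; ring
  -- the two integrals in the statement
  have hI1 : (∫ s in (0:ℝ)..y₂, 1 / (-(Real.sqrt (s * (y₂ - s) * (y₁ - s))))) = -A := by
    rw [integral_congr (g := fun s => -(w s)) ?_]
    · rw [intervalIntegral.integral_neg, hA]
    · intro s _
      simp only [hw, div_neg]
  have hI2 : (∫ s in (0:ℝ)..y₂,
      (-s ^ 2 + ((y₁ + y₂ - x₃) / 2) * s + x₃ * (y₁ + y₂) / 4 + (y₁ - y₂) ^ 2 / 8) /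
        (-(Real.sqrt (s * (y₂ - s) * (y₁ - s))))) = -N := by
    rw [integral_congr (g := fun s => -(P s * w s)) ?_]
    · rw [intervalIntegral.integral_neg, hN]
    · intro s _
      simp only [hw, hP, div_neg]
      rw [div_eq_mul_one_div]
  rw [hI1, hI2, inv_neg, neg_mul_neg]
  -- final assembly
  have hane : A ≠ 0 := ne_of_gt hApos
  have key : N - L * A = -C2 + a * E + 3 / 8 * y₂ ^ 2 * A := by
    rw [hNsplit, hBrel, ha, hcc, hL]; ring
  have hapos : 0 < a := by rw [ha]; linarith
  have haa : a ≤ (y₁ + y₁ - x₃) / 2 := by rw [ha]; linarith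
  have habs : |N - L * A| ≤ (1 + ((y₁ + y₁ - x₃) / 2) * (M * Real.sqrt y₁ / 4) + 3 / 8)
      * y₂ ^ 2 * A := by
    rw [key]
    refine le_trans (abs_add_three _ _ _) ?_
    rw [abs_neg, abs_mul, abs_of_pos hapos,
      abs_of_nonneg (by positivity : (0:ℝ) ≤ 3 / 8 * y₂ ^ 2 * A)]
    have t1 : a * |E| ≤ ((y₁ + y₁ - x₃) / 2) * ((M * Real.sqrt y₁ / 4) * y₂ ^ 2 * A) := by
      apply mul_le_mul haa hEb (abs_nonneg _) (by linarith)
    nlinarith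
  have : A⁻¹ * N - L = (N - L * A) / A := by field_simp
  rw [this, abs_div, abs_of_pos hApos, div_le_iff₀ hApos]
  exact habs

theorem stmt_8 (y₁ x₃ : ℝ) (hy1 : 0 < y₁) (hx3 : x₃ < -y₁)
    (g₁ : ℝ → ℝ)
    (hg1 : ∀ y₂ ∈ Set.Ioo (0:ℝ) y₁, g₁ y₂ =
      (∫ s in (0:ℝ)..y₂, 1 / (-(Real.sqrt (s * (y₂ - s) * (y₁ - s)))))⁻¹ *
      ∫ s in (0:ℝ)..y₂,
        (-s ^ 2 + ((y₁ + y₂ - x₃) / 2) * s + x₃ * (y₁ + y₂) / 4 + (y₁ - y₂) ^ 2 / 8) /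
          (-(Real.sqrt (s * (y₂ - s) * (y₁ - s))))) :
    (fun y₂ => g₁ y₂ - (y₁ / 4) * (x₃ + y₁ / 2)) =O[nhdsWithin 0 (Set.Ioi 0)]
      fun y₂ => y₂ ^ 2 := by
  rw [Asymptotics.isBigO_iff]
  refine ⟨1 + ((y₁ + y₁ - x₃) / 2) * (((y₁ / 2) * Real.sqrt (y₁ / 2))⁻¹ * Real.sqrt y₁ / 4)
    + 3 / 8, ?_⟩
  have hmem : Set.Ioo (0:ℝ) (y₁ / 2) ∈ nhdsWithin 0 (Set.Ioi 0) :=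
    Ioo_mem_nhdsGT_of_mem ⟨le_refl _, by linarith⟩
  filter_upwards [hmem] with y₂ hy₂
  obtain ⟨h0, hlt⟩ := hy₂
  rw [hg1 y₂ ⟨h0, by linarith⟩, Real.norm_eq_abs, Real.norm_eq_abs,
    abs_of_nonneg (by positivity : (0:ℝ) ≤ y₂ ^ 2)]
  exact core y₁ x₃ hy1 hx3 h0 hlt.le
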